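/- Compatibility of the Lax matrices implies the lattice H1 equation: let L_i(u, u_ī; α) = [[1, u],[0,1]]·[[0, μ - α],[1, -u_ī]]. Then the compatibility condition L_j(u_ī, u_īj̄; β)·L_i(u, u_ī; α) = L_i(u_j̄, u_īj̄; α)·L_j(u, u_j̄; β), required to hold for all values of the spectral parameter μ, holds if and only if (u - u_īj̄)(u_ī - u_j̄) + α - β = 0 (or u_ī = u_j̄ and α = β). -/

import Mathlib

/-- The Lax matrix `L(x, y; c) = [[1,x],[0,1]]·[[0, μ-c],[1, -y]]` of the lattice
potential KdV (H1) equation, with spectral parameter `μ`. -/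
noncomputable def laxL (x y c μ : ℂ) : Matrix (Fin 2) (Fin 2) ℂ :=
  !![1, x; 0, 1] * !![0, μ - c; 1, -y]

/-- the compatibility condition
`L_j(u_ī, u_īj̄; β) L_i(u, u_ī; α) = L_i(u_j̄, u_īj̄; α) L_j(u, u_j̄; β)`, as an identity
in the spectral parameter `μ`, holds if and only if the lattice H1 equation
`(u - u_īj̄)(u_ī - u_j̄) + α - β = 0` holds (or `u_ī = u_j̄` and `α = β`). -/
theorem lax_compatibility_iff_H1 (u uI uJ uIJ α β : ℂ) :
    (∀ μ : ℂ, laxL uI uIJ β μ * laxL u uI α μ = laxL uJ uIJ α μ * laxL u uJ β μ)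
      ↔ ((u - uIJ) * (uI - uJ) + α - β = 0 ∨ (uI = uJ ∧ α = β)) := by
  have key : ∀ x y c μ : ℂ, laxL x y c μ = !![x, μ - c - x * y; 1, -y] := by
    intro x y c μ
    simp [laxL]
    ring
  constructor
  · intro h
    left
    have h0 := congrFun (congrFun (h 0) 0) 0
    simp [key, Matrix.mul_apply, Fin.sum_univ_two] at h0
    linear_combination h0
  · rintro (h | ⟨h1, h2⟩) <;> intro μ
    · ext i j
      fin_cases i <;> fin_cases j <;>
        simp [key, Matrix.mul_apply, Fin.sum_univ_two] <;>
        first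
        | linear_combination h
        | linear_combination -(uI + uJ) * h
        | linear_combination -h
    · subst h1; subst h2; rfl
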